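/- arXiv:1506.06394 — 12 statements merged into one kernel-verified Lean document; each statement's English description precedes it below -/
import Mathlib

section
/- For systems f and g on a finite lattice P, the map a ↦ f a ∧ g a is a system and is the greatest lower bound of f and g in the lattice of systems. -/
def IsSystem {P : Type*} [Lattice P] (f : P → P) : Prop :=
  (∀ a, a ≤ f a) ∧ Monotone f ∧ ∀ a, f (f a) = f a

theorem stmt5 {P : Type*} [Lattice P] [Fintype P] {f g : P → P}
    (hf : IsSystem f) (hg : IsSystem g) :
    IsSystem (fun a => f a ⊓ g a) ∧
    (∀ a, f a ⊓ g a ≤ f a) ∧ (∀ a, f a ⊓ g a ≤ g a) ∧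
    ∀ h : P → P, IsSystem h → (∀ a, h a ≤ f a) → (∀ a, h a ≤ g a) →
      ∀ a, h a ≤ f a ⊓ g a := by
  obtain ⟨hf1, hf2, hf3⟩ := hf
  obtain ⟨hg1, hg2, hg3⟩ := hg
  refine ⟨⟨fun a => le_inf (hf1 a) (hg1 a),
    fun a b hab => inf_le_inf (hf2 hab) (hg2 hab), fun a => ?_⟩,
    fun a => inf_le_left, fun a => inf_le_right,
    fun h hh h1 h2 a => le_inf (h1 a) (h2 a)⟩
  refine le_antisymm (le_inf ?_ ?_) (le_inf (hf1 _) (hg1 _))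
  · exact inf_le_left.trans ((hf2 inf_le_left).trans (hf3 a).le)
  · exact inf_le_right.trans ((hg2 inf_le_right).trans (hg3 a).le)
end

section
/- For systems f and g on a finite lattice P with |P| = n, the n-fold composition (f∘g)^n is a system and is the least upper bound f + g of f and g in the lattice of systems. -/
lemma iter_ext {P : Type*} [Lattice P] {h : P → P} (hext : ∀ a, a ≤ h a) :
    ∀ k a, a ≤ h^[k] a := by
  intro k
  induction k with
  | zero => intro a; simp
  | succ m ih =>
    intro a
    rw [Function.iterate_succ_apply]
    exact (hext a).trans (ih (h a))

lemma iter_stab {P : Type*} [Lattice P] [Fintype P] {h : P → P}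
    (hext : ∀ a, a ≤ h a) (a : P) :
    h (h^[Fintype.card P] a) = h^[Fintype.card P] a := by
  set n := Fintype.card P with hn
  by_contra hne
  -- then for every k ≤ n, h^[k+1] a ≠ h^[k] a
  have step : ∀ k ≤ n, h^[k] a < h^[k+1] a := by
    intro k hk
    induction k with
    | zero =>
      simp only [Function.iterate_zero, Function.iterate_one, id]
      rcases lt_or_eq_of_le (hext a) with h1 | h1
      · exact h1
      · exfalso
        have : ∀ m, h^[m] a = a := by
          intro m
          induction m with
          | zero => simp
          | succ p ih => rw [Function.iterate_succ_apply, ← h1, ih]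
        exact hne (by rw [this n, ← h1])
    | succ m ih =>
      have hm : m ≤ n := Nat.le_of_succ_le hk
      rcases lt_or_eq_of_le (hext (h^[m+1] a)) with h1 | h1
      · rw [Function.iterate_succ_apply' h (m+1)]
        exact h1
      · exfalso
        -- h fixes h^[m+1] a, so all later iterates equal
        have fix : ∀ p, h^[p] (h^[m+1] a) = h^[m+1] a := by
          intro p
          induction p with
          | zero => simp
          | succ q ih2 => rw [Function.iterate_succ_apply', ih2, ← h1]
        have e1 : h^[n] a = h^[m+1] a := by
          have : n = (n - (m+1)) + (m+1) := (Nat.sub_add_cancel hk).symm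
          rw [this, Function.iterate_add_apply, fix]
        apply hne
        rw [e1, ← h1]
  -- strict mono map Fin (n+2) → P
  have smono : StrictMono (fun i : Fin (n + 2) => h^[(i : ℕ)] a) := by
    intro i j hij
    have : ∀ p q, p < q → q ≤ n + 1 → h^[p] a < h^[q] a := by
      intro p q hpq hq
      induction q with
      | zero => omega
      | succ r ih =>
        have hr : r ≤ n := Nat.le_of_succ_le_succ hq
        rcases Nat.lt_or_ge p r with h2 | h2
        · exact (ih h2 (by omega)).trans (step r hr)
        · have : p = r := by omega
          rw [this]; exact step r hr
    exact this i j hij (Nat.le_of_lt_succ j.isLt)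
  have := Fintype.card_le_of_injective _ smono.injective
  simp [hn] at this

theorem stmt6 {P : Type*} [Lattice P] [Fintype P] {f g : P → P}
    (hf : IsSystem f) (hg : IsSystem g) :
    IsSystem ((f ∘ g)^[Fintype.card P]) ∧
    (∀ a, f a ≤ (f ∘ g)^[Fintype.card P] a) ∧
    (∀ a, g a ≤ (f ∘ g)^[Fintype.card P] a) ∧
    ∀ h : P → P, IsSystem h → (∀ a, f a ≤ h a) → (∀ a, g a ≤ h a) →
      ∀ a, (f ∘ g)^[Fintype.card P] a ≤ h a := by
  obtain ⟨hfe, hfm, hfi⟩ := hf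
  obtain ⟨hge, hgm, hgi⟩ := hg
  set c := f ∘ g with hc
  have hce : ∀ a, a ≤ c a := fun a => (hge a).trans (hfe (g a))
  have hcm : Monotone c := hfm.comp hgm
  have hfix : ∀ a, c (c^[Fintype.card P] a) = c^[Fintype.card P] a := iter_stab hce
  have hfixk : ∀ k a, c^[k] (c^[Fintype.card P] a) = c^[Fintype.card P] a := by
    intro k a
    induction k with
    | zero => simp
    | succ m ih => rw [Function.iterate_succ_apply', ih, hfix]
  have hsys : IsSystem (c^[Fintype.card P]) :=
    ⟨iter_ext hce (Fintype.card P), hcm.iterate (Fintype.card P), fun a => hfixk (Fintype.card P) a⟩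
  refine ⟨hsys, ?_, ?_, ?_⟩
  · intro a
    obtain ⟨m, hm⟩ : ∃ m, Fintype.card P = m + 1 :=
      ⟨_, (Nat.succ_pred_eq_of_pos (Fintype.card_pos_iff.mpr ⟨a⟩)).symm⟩
    rw [hm]
    calc f a ≤ f (g a) := hfm (hge a)
        _ = c a := rfl
        _ ≤ c^[m] (c a) := iter_ext hce m (c a)
        _ = c^[m+1] a := (Function.iterate_succ_apply c m a).symm
  · intro a
    obtain ⟨m, hm⟩ : ∃ m, Fintype.card P = m + 1 :=
      ⟨_, (Nat.succ_pred_eq_of_pos (Fintype.card_pos_iff.mpr ⟨a⟩)).symm⟩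
    rw [hm]
    calc g a ≤ f (g a) := hfe (g a)
        _ = c a := rfl
        _ ≤ c^[m] (c a) := iter_ext hce m (c a)
        _ = c^[m+1] a := (Function.iterate_succ_apply c m a).symm
  · rintro h ⟨hhe, hhm, hhi⟩ hfh hgh a
    have key : ∀ k, c^[k] a ≤ h a := by
      intro k
      induction k with
      | zero => simpa using hhe a
      | succ m ih =>
        rw [Function.iterate_succ_apply']
        calc c (c^[m] a) = f (g (c^[m] a)) := rfl
          _ ≤ f (g (h a)) := hfm (hgm ih)
          _ ≤ f (h (h a)) := hfm (hgh (h a))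
          _ = f (h a) := by rw [hhi]
          _ ≤ h (h a) := hfh (h a)
          _ = h a := hhi a
    exact key (Fintype.card P)
end

section
/- For systems f and g on a finite lattice P, the set of fixed points of the join f + g equals the intersection of the sets of fixed points of f and g. -/
theorem stmt7 {P : Type*} [Lattice P] [Fintype P] {f g j : P → P}
    (hf : IsSystem f) (hg : IsSystem g) (hj : IsSystem j)
    (hjf : ∀ a, f a ≤ j a) (hjg : ∀ a, g a ≤ j a)
    (hlub : ∀ h : P → P, IsSystem h → (∀ a, f a ≤ h a) → (∀ a, g a ≤ h a) →
      ∀ a, j a ≤ h a) :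
    {a | j a = a} = {a | f a = a} ∩ {a | g a = a} := by
  ext a
  simp only [Set.mem_setOf_eq, Set.mem_inter_iff]
  constructor
  · intro h
    exact ⟨le_antisymm ((hjf a).trans h.le) (hf.1 a),
           le_antisymm ((hjg a).trans h.le) (hg.1 a)⟩
  · rintro ⟨hfa, hga⟩
    have hne : (Finset.univ : Finset P).Nonempty := ⟨a, Finset.mem_univ a⟩
    set M := Finset.univ.sup' hne id with hM
    have hle : ∀ x : P, x ≤ M := fun x => Finset.le_sup' id (Finset.mem_univ x)
    classical
    set h : P → P := fun x => if x ≤ a then a else M with hh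
    have hsys : IsSystem h := by
      refine ⟨fun x => ?_, fun x y hxy => ?_, fun x => ?_⟩
      · by_cases hx : x ≤ a
        · simp [hh, hx]
        · simpa [hh, hx] using hle x
      · by_cases hy : y ≤ a
        · have hx : x ≤ a := hxy.trans hy
          simp [hh, hx, hy]
        · by_cases hx : x ≤ a <;> simp [hh, hx, hy, hle a]
      · by_cases hx : x ≤ a
        · simp [hh, hx]
        · have hMa : ¬ M ≤ a := fun hMA => hx ((hle x).trans hMA)
          simp [hh, hx, hMa]
    have hhf : ∀ x, f x ≤ h x := by
      intro x
      by_cases hx : x ≤ a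
      · have : f x ≤ a := (hf.2.1 hx).trans hfa.le
        simpa [hh, hx]
      · simpa [hh, hx] using hle (f x)
    have hhg : ∀ x, g x ≤ h x := by
      intro x
      by_cases hx : x ≤ a
      · have : g x ≤ a := (hg.2.1 hx).trans hga.le
        simpa [hh, hx]
      · simpa [hh, hx] using hle (g x)
    have := hlub h hsys hhf hhg a
    simp only [hh, le_refl, if_pos] at this
    exact le_antisymm this (hj.1 a)
end

section
/- For systems f and g on a finite lattice P, the fixed point set of the meet f · g equals the set meet Φf ∧ Φg = {a ∧ b : a ∈ Φf, b ∈ Φg}. -/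
theorem stmt8 {P : Type*} [Lattice P] [Fintype P] {f g : P → P}
    (hf : IsSystem f) (hg : IsSystem g) :
    {x | f x ⊓ g x = x} =
      {x | ∃ a, f a = a ∧ ∃ b, g b = b ∧ x = a ⊓ b} := by
  obtain ⟨hf1, hf2, hf3⟩ := hf
  obtain ⟨hg1, hg2, hg3⟩ := hg
  ext x
  constructor
  · intro hx
    exact ⟨f x, hf3 x, g x, hg3 x, hx.symm⟩
  · rintro ⟨a, ha, b, hb, rfl⟩
    simp only [Set.mem_setOf_eq]
    apply le_antisymm
    · exact le_inf (inf_le_left.trans ((hf2 inf_le_left).trans ha.le))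
        (inf_le_right.trans ((hg2 inf_le_right).trans hb.le))
    · exact le_inf (hf1 _) (hg1 _)
end

section
/- The lattice of systems on a finite lattice P is distributive if and only if P is linearly ordered. -/
def sysMeet {P : Type*} [Lattice P] (f g : P → P) : P → P := fun a => f a ⊓ g a

def sysJoin {P : Type*} [Lattice P] [Fintype P] (f g : P → P) : P → P :=
  (f ∘ g)^[Fintype.card P]

section Aux

variable {P : Type*} [Lattice P]

lemma le_iterate {F : P → P} (hF : ∀ z, z ≤ F z) (m : ℕ) (x : P) : x ≤ F^[m] x := by
  induction m with
  | zero => simp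
  | succ t ih => rw [Function.iterate_succ_apply']; exact ih.trans (hF _)

lemma iterate_fix [Fintype P] {F : P → P} (hF : ∀ z, z ≤ F z) (x : P) :
    F (F^[Fintype.card P] x) = F^[Fintype.card P] x := by
  obtain ⟨i, j, hij, he⟩ := Fintype.exists_ne_map_eq_of_card_lt
      (fun i : Fin (Fintype.card P + 1) => F^[(i : ℕ)] x) (by simp)
  have main : ∀ p q : ℕ, p < q → q ≤ Fintype.card P → F^[p] x = F^[q] x →
      F (F^[Fintype.card P] x) = F^[Fintype.card P] x := by
    intro p q hpq hq he
    have key : F (F^[p] x) = F^[p] x := by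
      apply le_antisymm _ (hF _)
      have h1 : F^[p + 1] x ≤ F^[q] x := by
        have hj : F^[q] x = F^[q - (p + 1)] (F^[p + 1] x) := by
          rw [← Function.iterate_add_apply, show q - (p + 1) + (p + 1) = q from by omega]
        rw [hj]
        exact le_iterate hF _ _
      rw [Function.iterate_succ_apply'] at h1
      rw [← he] at h1
      exact h1
    have const : ∀ m, F^[p + m] x = F^[p] x := by
      intro m
      induction m with
      | zero => rfl
      | succ t ih =>
        rw [← Nat.add_assoc, Function.iterate_succ_apply', ih, key]
    have hcard : Fintype.card P = p + (Fintype.card P - p) := by omega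
    rw [hcard, const, key]
  rcases hij.lt_or_gt with hlt | hlt
  · exact main i j hlt (by omega) he
  · exact main j i hlt (by omega) he.symm

variable [Fintype P]

lemma comp_infl {f g : P → P} (hf : IsSystem f) (hg : IsSystem g) :
    ∀ z, z ≤ (f ∘ g) z := fun z => (hg.1 z).trans (hf.1 (g z))

lemma le_sysJoin {f g : P → P} (hf : IsSystem f) (hg : IsSystem g) (x : P) :
    x ≤ sysJoin f g x := le_iterate (comp_infl hf hg) _ x

lemma sysJoin_fix {f g : P → P} (hf : IsSystem f) (hg : IsSystem g) (x : P) :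
    f (sysJoin f g x) = sysJoin f g x ∧ g (sysJoin f g x) = sysJoin f g x := by
  have hfix := iterate_fix (comp_infl hf hg) x
  set J := sysJoin f g x with hJ
  have hfgJ : f (g J) = J := hfix
  have hgJ : g J = J :=
    le_antisymm (by calc g J ≤ f (g J) := hf.1 _
                      _ = J := hfgJ) (hg.1 J)
  refine ⟨?_, hgJ⟩
  calc f J = f (g J) := by rw [hgJ]
    _ = J := hfgJ

lemma sysJoin_le {f g : P → P} (hf : IsSystem f) (hg : IsSystem g) {x y : P}
    (hxy : x ≤ y) (hfy : f y = y) (hgy : g y = y) : sysJoin f g x ≤ y := by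
  have : ∀ m, (f ∘ g)^[m] x ≤ y := by
    intro m
    induction m with
    | zero => simpa using hxy
    | succ t ih =>
      rw [Function.iterate_succ_apply']
      calc (f ∘ g) ((f ∘ g)^[t] x) ≤ (f ∘ g) y := hf.2.1 (hg.2.1 ih)
        _ = y := by simp only [Function.comp_apply, hgy, hfy]
  exact this _

lemma isSystem_sysMeet {f h : P → P} (hf : IsSystem f) (hh : IsSystem h) :
    IsSystem (sysMeet f h) := by
  refine ⟨fun a => le_inf (hf.1 a) (hh.1 a),
    fun a b hab => inf_le_inf (hf.2.1 hab) (hh.2.1 hab), fun a => ?_⟩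
  apply le_antisymm
  · apply inf_le_inf
    · calc f (f a ⊓ h a) ≤ f (f a) := hf.2.1 inf_le_left
        _ = f a := hf.2.2 a
    · calc h (f a ⊓ h a) ≤ h (h a) := hh.2.1 inf_le_right
        _ = h a := hh.2.2 a
  · exact le_inf (hf.1 _) (hh.1 _)

lemma isSystem_sup_const (b : P) : IsSystem (fun x => x ⊔ b) := by
  refine ⟨fun a => le_sup_left, fun x y hxy => sup_le_sup_right hxy b, fun a => ?_⟩
  simp [sup_assoc]

open Classical in
noncomputable def gOp (a b : P) : P → P :=
  fun x => if x ≤ a ⊓ b then a ⊓ b else if x ≤ a then a else x ⊔ (a ⊔ b)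

lemma isSystem_gOp {a b : P} (hab : ¬ a ≤ b) (hba : ¬ b ≤ a) : IsSystem (gOp a b) := by
  classical
  have hsm : ¬ a ⊔ b ≤ a ⊓ b := fun hc => hab ((le_sup_left.trans hc).trans inf_le_right)
  have hsa : ¬ a ⊔ b ≤ a := fun hc => hba (le_sup_right.trans hc)
  refine ⟨fun x => ?_, fun x y hxy => ?_, fun x => ?_⟩
  · unfold gOp; split_ifs with h1 h2
    · exact h1
    · exact h2
    · exact le_sup_left
  · unfold gOp
    by_cases h1 : x ≤ a ⊓ b
    · rw [if_pos h1]
      split_ifs with h2 h3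
      · exact le_rfl
      · exact inf_le_left
      · exact (inf_le_left.trans le_sup_left).trans le_sup_right
    · rw [if_neg h1]
      by_cases h2 : x ≤ a
      · rw [if_pos h2]
        split_ifs with h3 h4
        · exact absurd (hxy.trans h3) h1
        · exact le_rfl
        · exact le_sup_left.trans le_sup_right
      · rw [if_neg h2]
        split_ifs with h3 h4
        · exact absurd (hxy.trans h3) h1
        · exact absurd (hxy.trans h4) h2
        · exact sup_le_sup_right hxy _
  · unfold gOp
    by_cases h1 : x ≤ a ⊓ b
    · rw [if_pos h1, if_pos le_rfl]
    · rw [if_neg h1]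
      by_cases h2 : x ≤ a
      · rw [if_pos h2, if_neg (fun hc => hab (hc.trans inf_le_right)), if_pos le_rfl]
      · rw [if_neg h2, if_neg (fun hc => hsm (le_sup_right.trans hc)),
          if_neg (fun hc => hsa (le_sup_right.trans hc)), sup_assoc, sup_idem]

lemma gOp_inf {a b : P} : gOp a b (a ⊓ b) = a ⊓ b := by
  classical
  unfold gOp; rw [if_pos le_rfl]

lemma gOp_b {a b : P} (hab : ¬ a ≤ b) (hba : ¬ b ≤ a) : gOp a b b = a ⊔ b := by
  classical
  unfold gOp
  rw [if_neg (fun hc => hba (hc.trans inf_le_left)), if_neg hba, sup_eq_right.2 le_sup_right]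

lemma gOp_sup {a b : P} (hab : ¬ a ≤ b) (hba : ¬ b ≤ a) : gOp a b (a ⊔ b) = a ⊔ b := by
  classical
  unfold gOp
  rw [if_neg (fun hc => hab ((le_sup_left.trans hc).trans inf_le_right)),
    if_neg (fun hc => hba (le_sup_right.trans hc)), sup_idem]

end Aux

theorem stmt10 {P : Type*} [Lattice P] [Fintype P] :
    (∀ f g h : P → P, IsSystem f → IsSystem g → IsSystem h →
      sysMeet (sysJoin f g) h = sysJoin (sysMeet f h) (sysMeet g h)) ↔
    ∀ a b : P, a ≤ b ∨ b ≤ a := by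
  constructor
  · intro H a b
    by_contra hc
    push_neg at hc
    obtain ⟨hab, hba⟩ := hc
    set f : P → P := fun x => x ⊔ b with hf
    set h : P → P := fun x => x ⊔ a with hh
    have hfS : IsSystem f := isSystem_sup_const b
    have hhS : IsSystem h := isSystem_sup_const a
    have hgS : IsSystem (gOp a b) := isSystem_gOp hab hba
    have key := congrFun (H f (gOp a b) h hfS hgS hhS) (a ⊓ b)
    -- Compute LHS
    have hn2 : 2 ≤ Fintype.card P := by
      have : Nontrivial P := ⟨a, b, fun e => hab (e ▸ le_rfl)⟩
      exact Fintype.one_lt_card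
    have hFm : (f ∘ gOp a b) (a ⊓ b) = b := by
      show f (gOp a b (a ⊓ b)) = b
      rw [gOp_inf]
      show (a ⊓ b) ⊔ b = b
      exact sup_eq_right.2 inf_le_right
    have hFb : (f ∘ gOp a b) b = a ⊔ b := by
      show f (gOp a b b) = a ⊔ b
      rw [gOp_b hab hba]
      show (a ⊔ b) ⊔ b = a ⊔ b
      exact sup_eq_left.2 le_sup_right
    have hFs : (f ∘ gOp a b) (a ⊔ b) = a ⊔ b := by
      show f (gOp a b (a ⊔ b)) = a ⊔ b
      rw [gOp_sup hab hba]
      show (a ⊔ b) ⊔ b = a ⊔ b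
      exact sup_eq_left.2 le_sup_right
    have hLHS : sysMeet (sysJoin f (gOp a b)) h (a ⊓ b) = a := by
      have hJ : sysJoin f (gOp a b) (a ⊓ b) = a ⊔ b := by
        unfold sysJoin
        obtain ⟨t, ht⟩ : ∃ t, Fintype.card P = t + 2 := ⟨Fintype.card P - 2, by omega⟩
        rw [ht, Function.iterate_add_apply]
        have h2 : (f ∘ gOp a b)^[2] (a ⊓ b) = a ⊔ b := by
          rw [show (2 : ℕ) = 1 + 1 from rfl, Function.iterate_add_apply]
          show (f ∘ gOp a b) ((f ∘ gOp a b) (a ⊓ b)) = a ⊔ b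
          rw [hFm, hFb]
        rw [h2, Function.iterate_fixed hFs]
      unfold sysMeet
      rw [hJ]
      show (a ⊔ b) ⊓ ((a ⊓ b) ⊔ a) = a
      rw [sup_comm (a ⊓ b) a, (show a ⊔ (a ⊓ b) = a from sup_eq_left.2 inf_le_left),
        inf_eq_right.2 le_sup_left]
    have hRHS : sysJoin (sysMeet f h) (sysMeet (gOp a b) h) (a ⊓ b) = a ⊓ b := by
      unfold sysJoin
      apply Function.iterate_fixed
      have hlm : sysMeet (gOp a b) h (a ⊓ b) = a ⊓ b := by
        unfold sysMeet
        rw [gOp_inf]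
        show (a ⊓ b) ⊓ ((a ⊓ b) ⊔ a) = a ⊓ b
        rw [sup_comm (a ⊓ b) a, (show a ⊔ (a ⊓ b) = a from sup_eq_left.2 inf_le_left),
          inf_eq_left.2 inf_le_left]
      have hkm : sysMeet f h (a ⊓ b) = a ⊓ b := by
        unfold sysMeet
        show ((a ⊓ b) ⊔ b) ⊓ ((a ⊓ b) ⊔ a) = a ⊓ b
        rw [sup_eq_right.2 inf_le_right, sup_comm (a ⊓ b) a,
          (show a ⊔ (a ⊓ b) = a from sup_eq_left.2 inf_le_left), inf_comm b a]
      simp only [Function.comp_apply, hlm, hkm]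
    rw [hLHS, hRHS] at key
    exact hab (key ▸ inf_le_right)
  · intro hchain f g h hf hg hh
    funext x
    have hk : IsSystem (sysMeet f h) := isSystem_sysMeet hf hh
    have hl : IsSystem (sysMeet g h) := isSystem_sysMeet hg hh
    set r := sysJoin (sysMeet f h) (sysMeet g h) x with hr
    apply le_antisymm
    · -- LHS ≤ RHS
      have hxr : x ≤ r := le_sysJoin hk hl x
      obtain ⟨hkr, hlr⟩ := sysJoin_fix hk hl x
      have hkr' : f r ⊓ h r = r := hkr
      have hlr' : g r ⊓ h r = r := hlr
      show sysJoin f g x ⊓ h x ≤ r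
      rcases hchain (f r) (h r) with h1 | h1
      · rcases hchain (g r) (h r) with h2 | h2
        · -- f r = r and g r = r
          have hfr : f r = r :=
            le_antisymm (le_of_le_of_eq (le_inf le_rfl h1) hkr') (hf.1 r)
          have hgr : g r = r :=
            le_antisymm (le_of_le_of_eq (le_inf le_rfl h2) hlr') (hg.1 r)
          exact inf_le_left.trans (sysJoin_le hf hg hxr hfr hgr)
        · have hhr : h r = r :=
            le_antisymm (le_of_le_of_eq (le_inf h2 le_rfl) hlr') (hh.1 r)
          exact inf_le_right.trans (by calc h x ≤ h r := hh.2.1 hxr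
            _ = r := hhr)
      · have hhr : h r = r :=
            le_antisymm (le_of_le_of_eq (le_inf h1 le_rfl) hkr') (hh.1 r)
        exact inf_le_right.trans (by calc h x ≤ h r := hh.2.1 hxr
          _ = r := hhr)
    · -- RHS ≤ LHS
      show r ≤ sysJoin f g x ⊓ h x
      apply le_inf
      · set J := sysJoin f g x with hJ
        have hxJ : x ≤ J := le_sysJoin hf hg x
        obtain ⟨hfJ, hgJ⟩ := sysJoin_fix hf hg x
        apply sysJoin_le hk hl hxJ
        · show f J ⊓ h J = J
          rw [hfJ, inf_eq_left.2 (hh.1 J)]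
        · show g J ⊓ h J = J
          rw [hgJ, inf_eq_left.2 (hh.1 J)]
      · apply sysJoin_le hk hl (hh.1 x)
        · show f (h x) ⊓ h (h x) = h x
          rw [hh.2.2, inf_eq_right.2 (hf.1 (h x))]
        · show g (h x) ⊓ h (h x) = h x
          rw [hh.2.2, inf_eq_right.2 (hg.1 (h x))]
end

section
/- The lattice of systems on a finite lattice P is modular if and only if P is linearly ordered. -/
section Aux

variable {P : Type*} [Lattice P]

lemma aux_le_iter (e : P → P) (he : ∀ a, a ≤ e a) (x : P) : ∀ k, x ≤ e^[k] x := by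
  intro k
  induction k with
  | zero => simp
  | succ k ih =>
    rw [Function.iterate_succ_apply']
    exact ih.trans (he _)

lemma aux_iter_le_fixed (v : P → P) (hv : Monotone v) {x z : P} (hxz : x ≤ z) (hz : v z = z) :
    ∀ k, v^[k] x ≤ z := by
  intro k
  induction k with
  | zero => simpa
  | succ k ih =>
    rw [Function.iterate_succ_apply']
    calc v (v^[k] x) ≤ v z := hv ih
    _ = z := hz

lemma aux_iter_mono (u v : P → P) (hu : Monotone u) (huv : ∀ a, u a ≤ v a) (x : P) :
    ∀ k, u^[k] x ≤ v^[k] x := by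
  intro k
  induction k with
  | zero => simp
  | succ k ih =>
    rw [Function.iterate_succ_apply', Function.iterate_succ_apply']
    exact (hu ih).trans (huv _)

lemma aux_stab [Fintype P] (e : P → P) (hmono : Monotone e) (he : ∀ a, a ≤ e a) (x : P) :
    e (e^[Fintype.card P] x) = e^[Fintype.card P] x := by
  set n := Fintype.card P with hn
  by_cases hex : ∃ k, k < n ∧ e^[k + 1] x = e^[k] x
  · obtain ⟨k, hk, hfix⟩ := hex
    rw [Function.iterate_succ_apply'] at hfix
    have key : e^[n] x = e^[k] x := by
      calc e^[n] x = e^[(n - k) + k] x := by rw [Nat.sub_add_cancel hk.le]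
      _ = e^[n - k] (e^[k] x) := Function.iterate_add_apply _ _ _ _
      _ = e^[k] x := Function.iterate_fixed hfix _
    rw [key]
    exact hfix
  · exfalso
    push_neg at hex
    have sm : StrictMono (fun i : Fin (n + 1) => e^[(i : ℕ)] x) := by
      rw [Fin.strictMono_iff_lt_succ]
      intro i
      have h1 : e^[(i : ℕ)] x ≤ e^[(i : ℕ) + 1] x := by
        rw [Function.iterate_succ_apply']
        exact he _
      have h2 := hex i i.isLt
      simp only [Fin.coe_castSucc, Fin.val_succ]
      exact lt_of_le_of_ne h1 (Ne.symm h2)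
    have hcard := Fintype.card_le_of_injective _ sm.injective
    rw [Fintype.card_fin] at hcard
    omega

end Aux

theorem stmt11 {P : Type*} [Lattice P] [Fintype P] :
    (∀ f g h : P → P, IsSystem f → IsSystem g → IsSystem h →
      (∀ a, h a ≤ g a) →
      sysJoin h (sysMeet f g) = sysMeet (sysJoin h f) g) ↔
    ∀ a b : P, a ≤ b ∨ b ≤ a := by
  classical
  constructor
  · intro H a b
    by_contra hcon
    push_neg at hcon
    obtain ⟨hab, hba⟩ := hcon
    set f : P → P := fun x => x ⊔ b with hf
    set g : P → P := fun x => x ⊔ a with hg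
    set h : P → P := fun x => if x ≤ a ⊓ b then a ⊓ b else x ⊔ a with hh
    have hSf : IsSystem f := ⟨fun x => le_sup_left, fun x y hxy => sup_le_sup_right hxy b,
      fun x => by simp [hf, sup_assoc]⟩
    have hSg : IsSystem g := ⟨fun x => le_sup_left, fun x y hxy => sup_le_sup_right hxy a,
      fun x => by simp [hg, sup_assoc]⟩
    have hnb : ¬ b ≤ a ⊓ b := fun hle => hba (hle.trans inf_le_left)
    have hnba : ¬ b ⊔ a ≤ a ⊓ b := fun hle => hnb (le_sup_left.trans hle)
    have hSh : IsSystem h := by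
      refine ⟨fun x => ?_, fun x y hxy => ?_, fun x => ?_⟩
      · simp only [hh]
        by_cases hx : x ≤ a ⊓ b
        · rw [if_pos hx]; exact hx
        · rw [if_neg hx]; exact le_sup_left
      · simp only [hh]
        by_cases hx : x ≤ a ⊓ b
        · rw [if_pos hx]
          by_cases hy : y ≤ a ⊓ b
          · rw [if_pos hy]
          · rw [if_neg hy]
            exact inf_le_left.trans le_sup_right
        · have hy : ¬ y ≤ a ⊓ b := fun hle => hx (hxy.trans hle)
          rw [if_neg hx, if_neg hy]
          exact sup_le_sup_right hxy a
      · simp only [hh]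
        by_cases hx : x ≤ a ⊓ b
        · rw [if_pos hx, if_pos le_rfl]
        · have hx2 : ¬ x ⊔ a ≤ a ⊓ b := fun hle => hx (le_sup_left.trans hle)
          rw [if_neg hx, if_neg hx2, sup_assoc, sup_idem]
    have hle : ∀ x, h x ≤ g x := by
      intro x
      simp only [hh, hg]
      by_cases hx : x ≤ a ⊓ b
      · rw [if_pos hx]
        exact inf_le_left.trans le_sup_right
      · rw [if_neg hx]
    have heq := congrFun (H f g h hSf hSg hSh hle) (a ⊓ b)
    have hfb : f (a ⊓ b) = b := sup_eq_right.mpr inf_le_right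
    have hga : g (a ⊓ b) = a := sup_eq_right.mpr inf_le_left
    have hhab : h (a ⊓ b) = a ⊓ b := by simp only [hh]; rw [if_pos le_rfl]
    have hm : sysMeet f g (a ⊓ b) = a ⊓ b := by
      show f (a ⊓ b) ⊓ g (a ⊓ b) = a ⊓ b
      rw [hfb, hga, inf_comm]
    have hfixL : (h ∘ sysMeet f g) (a ⊓ b) = a ⊓ b := by
      show h (sysMeet f g (a ⊓ b)) = a ⊓ b
      rw [hm, hhab]
    have hL : sysJoin h (sysMeet f g) (a ⊓ b) = a ⊓ b :=
      Function.iterate_fixed hfixL _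
    have hfba : f (b ⊔ a) = b ⊔ a := by
      show (b ⊔ a) ⊔ b = b ⊔ a
      exact sup_eq_left.mpr le_sup_left
    have hhba : h (b ⊔ a) = b ⊔ a := by
      simp only [hh]
      rw [if_neg hnba]
      exact sup_eq_left.mpr le_sup_right
    have hfixR : (h ∘ f) (b ⊔ a) = b ⊔ a := by
      show h (f (b ⊔ a)) = b ⊔ a
      rw [hfba, hhba]
    have h1 : (h ∘ f) (a ⊓ b) = b ⊔ a := by
      show h (f (a ⊓ b)) = b ⊔ a
      rw [hfb]
      simp only [hh]
      rw [if_neg hnb]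
    have hR : sysJoin h f (a ⊓ b) = b ⊔ a := by
      unfold sysJoin
      obtain ⟨k, hk⟩ : ∃ k, Fintype.card P = k + 1 :=
        ⟨Fintype.card P - 1, by have := Fintype.card_pos_iff.mpr ⟨a⟩; omega⟩
      rw [hk, Function.iterate_succ_apply, h1]
      exact Function.iterate_fixed hfixR _
    have hR2 : sysMeet (sysJoin h f) g (a ⊓ b) = a := by
      show sysJoin h f (a ⊓ b) ⊓ g (a ⊓ b) = a
      rw [hR, hga]
      exact inf_eq_right.mpr le_sup_right
    rw [hL, hR2] at heq
    exact hab (inf_eq_left.mp heq)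
  · intro lin f g h hSf hSg hSh hle
    obtain ⟨hfe, hfm, hfi⟩ := hSf
    obtain ⟨hge, hgm, hgi⟩ := hSg
    obtain ⟨hhe, hhm, hhi⟩ := hSh
    set n := Fintype.card P with hn
    set m : P → P := sysMeet f g with hm
    have hme : ∀ x, x ≤ m x := fun x => le_inf (hfe x) (hge x)
    have hmm : Monotone m := fun x y hxy => inf_le_inf (hfm hxy) (hgm hxy)
    have hcm : Monotone (h ∘ m) := fun x y hxy => hhm (hmm hxy)
    have hce : ∀ x, x ≤ (h ∘ m) x := fun x => (hme x).trans (hhe _)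
    have hcfm : Monotone (h ∘ f) := fun x y hxy => hhm (hfm hxy)
    funext x
    apply le_antisymm
    · refine le_inf ?_ ?_
      · exact aux_iter_mono (h ∘ m) (h ∘ f) hcm
          (fun a => hhm (inf_le_left : m a ≤ f a)) x n
      · have key : ∀ k, (h ∘ m)^[k] x ≤ g x := by
          intro k
          induction k with
          | zero => simpa using hge x
          | succ k ih =>
            rw [Function.iterate_succ_apply']
            have h1 : (h ∘ m) ((h ∘ m)^[k] x) ≤ (h ∘ m) (g x) := hcm ih
            have h2 : m (g x) ≤ g x := by
              have h2' : m (g x) ≤ g (g x) := inf_le_right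
              rwa [hgi] at h2'
            have h3 : h (m (g x)) ≤ h (g x) := hhm h2
            have h4 : h (g x) ≤ g (g x) := hle _
            rw [hgi] at h4
            exact h1.trans (h3.trans h4)
        exact key n
    · set y := (h ∘ m)^[n] x with hy
      have hxy : x ≤ y := aux_le_iter (h ∘ m) hce x n
      have hfixy : (h ∘ m) y = y := aux_stab (h ∘ m) hcm hce x
      have hmy : m y = y := le_antisymm (by
        calc m y ≤ h (m y) := hhe _
        _ = y := hfixy) (hme y)
      have hmy' : f y ⊓ g y = y := hmy
      have hhy : h y = y := by
        have := hfixy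
        show h y = y
        calc h y = h (m y) := by rw [hmy]
        _ = y := hfixy
      show sysMeet (sysJoin h f) g x ≤ y
      rcases lin (f y) (g y) with hc | hc
      · have hfy : f y = y := (inf_eq_left.mpr hc).symm.trans hmy'
        have hfixhf : (h ∘ f) y = y := by
          show h (f y) = y
          rw [hfy, hhy]
        calc sysMeet (sysJoin h f) g x ≤ sysJoin h f x := inf_le_left
        _ ≤ y := aux_iter_le_fixed (h ∘ f) hcfm hxy hfixhf n
      · have hgy : g y = y := (inf_eq_right.mpr hc).symm.trans hmy'
        calc sysMeet (sysJoin h f) g x ≤ g x := inf_le_right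
        _ ≤ g y := hgm hxy
        _ = y := hgy
end

section
/- A pair of systems (f, g) on a finite lattice P is a modular pair in the lattice of systems if and only if the union Φf ∪ Φg of their fixed point sets is closed under binary meet. -/
section Aux

variable {P : Type*} [Lattice P] [Fintype P]

private lemma iter_chain {F : P → P} (hinfl : ∀ a, a ≤ F a) (a : P) :
    Monotone fun n => F^[n] a :=
  monotone_nat_of_le_succ fun n => by
    rw [Function.iterate_succ_apply']
    exact hinfl _

private lemma iter_fix {F : P → P} (hinfl : ∀ a, a ≤ F a) (a : P) :
    F (F^[Fintype.card P] a) = F^[Fintype.card P] a := by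
  set N := Fintype.card P with hN
  have hch := iter_chain hinfl a
  have hninj : ¬ Function.Injective (fun i : Fin (N + 1) => F^[i.1] a) := by
    intro hinj
    have := Fintype.card_le_of_injective _ hinj
    rw [Fintype.card_fin] at this
    omega
  obtain ⟨i, j, heq, hne⟩ := Function.not_injective_iff.mp hninj
  have hstep : ∃ k, k ≤ N ∧ F (F^[k] a) = F^[k] a := by
    rcases lt_or_gt_of_ne hne with hlt | hlt
    · refine ⟨i.1, by omega, le_antisymm ?_ (hinfl _)⟩
      calc F (F^[i.1] a) = F^[i.1 + 1] a := (Function.iterate_succ_apply' F _ a).symm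
        _ ≤ F^[j.1] a := hch (by exact_mod_cast hlt)
        _ = F^[i.1] a := heq.symm
    · refine ⟨j.1, by omega, le_antisymm ?_ (hinfl _)⟩
      calc F (F^[j.1] a) = F^[j.1 + 1] a := (Function.iterate_succ_apply' F _ a).symm
        _ ≤ F^[i.1] a := hch (by exact_mod_cast hlt)
        _ = F^[j.1] a := heq
  obtain ⟨k, hkN, hk⟩ := hstep
  have hNk : F^[N] a = F^[k] a := by
    conv_lhs => rw [show N = (N - k) + k by omega]
    rw [Function.iterate_add_apply, Function.iterate_fixed hk]
  rw [hNk, hk]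

private lemma sysJoin_spec {h m : P → P} (hh : IsSystem h)
    (hm1 : ∀ a, a ≤ m a) (hm2 : Monotone m) (a : P) :
    a ≤ sysJoin h m a ∧ h (sysJoin h m a) = sysJoin h m a ∧
      m (sysJoin h m a) = sysJoin h m a ∧
      ∀ y, a ≤ y → h y = y → m y = y → sysJoin h m a ≤ y := by
  obtain ⟨h1, h2, _⟩ := hh
  have hFinfl : ∀ x, x ≤ (h ∘ m) x := fun x => (hm1 x).trans (h1 _)
  have hFmono : Monotone (h ∘ m) := h2.comp hm2
  have hfix : (h ∘ m) ((h ∘ m)^[Fintype.card P] a) = (h ∘ m)^[Fintype.card P] a :=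
    iter_fix hFinfl a
  have hje : sysJoin h m a = (h ∘ m)^[Fintype.card P] a := rfl
  set c := (h ∘ m)^[Fintype.card P] a with hc
  have hmc : m c = c := le_antisymm ((h1 (m c)).trans hfix.le) (hm1 c)
  have hhc : h c = c := by nth_rewrite 1 [← hmc]; exact hfix
  refine ⟨?_, by rw [hje]; exact hhc, by rw [hje]; exact hmc, ?_⟩
  · rw [hje]
    exact iter_chain hFinfl a (Nat.zero_le _)
  · intro y hay hhy hmy
    have hFy : (h ∘ m) y = y := by show h (m y) = y; rw [hmy, hhy]
    rw [hje, hc]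
    calc (h ∘ m)^[Fintype.card P] a ≤ (h ∘ m)^[Fintype.card P] y :=
          hFmono.iterate _ hay
      _ = y := Function.iterate_fixed hFy _

end Aux

theorem stmt13 {P : Type*} [Lattice P] [Fintype P] {f g : P → P}
    (hf : IsSystem f) (hg : IsSystem g) :
    (∀ h : P → P, IsSystem h → (∀ a, h a ≤ g a) →
      sysJoin h (sysMeet f g) = sysMeet (sysJoin h f) g) ↔
    (∀ a b : P, a ∈ {x | f x = x} ∪ {x | g x = x} →
      b ∈ {x | f x = x} ∪ {x | g x = x} →
      a ⊓ b ∈ {x | f x = x} ∪ {x | g x = x}) := by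
  classical
  constructor
  · intro hmod a b hab hbb
    simp only [Set.mem_union, Set.mem_setOf_eq] at hab hbb ⊢
    have meetΦ : ∀ (k : P → P), IsSystem k → ∀ x y : P, k x = x → k y = y →
        k (x ⊓ y) = x ⊓ y := fun k hk x y hx hy =>
      le_antisymm (le_inf ((hk.2.1 inf_le_left).trans hx.le)
        ((hk.2.1 inf_le_right).trans hy.le)) (hk.1 _)
    have mixed : ∀ x₁ x₂ : P, f x₁ = x₁ → g x₂ = x₂ →
        f (x₁ ⊓ x₂) = x₁ ⊓ x₂ ∨ g (x₁ ⊓ x₂) = x₁ ⊓ x₂ := by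
      intro x₁ x₂ hx₁ hx₂
      set c := x₁ ⊓ x₂ with hcdef
      set h₀ : P → P := fun x => if x ≤ c then x else g x with hh₀
      have hsys : IsSystem h₀ := by
        refine ⟨fun x => ?_, fun x y hxy => ?_, fun x => ?_⟩
        · simp only [hh₀]
          split
          · exact le_rfl
          · exact hg.1 x
        · simp only [hh₀]
          by_cases hx : x ≤ c <;> by_cases hy : y ≤ c <;>
            simp only [if_pos, if_neg, hx, hy, if_true, if_false]
          · exact hxy
          · exact hxy.trans (hg.1 y)
          · exact absurd (hxy.trans hy) hx
          · exact hg.2.1 hxy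
        · simp only [hh₀]
          by_cases hx : x ≤ c
          · simp [hx]
          · simp only [if_neg hx]
            by_cases hgx : g x ≤ c
            · simp [hgx]
            · simp [hgx, hg.2.2 x]
      have hle : ∀ x, h₀ x ≤ g x := by
        intro x
        simp only [hh₀]
        split
        · exact hg.1 x
        · exact le_rfl
      have heq := congrFun (hmod h₀ hsys hle) c
      have hmcfix : sysMeet f g c = c := by
        show f c ⊓ g c = c
        refine le_antisymm (le_inf ?_ ?_) (le_inf (hf.1 c) (hg.1 c))
        · exact inf_le_left.trans ((hf.2.1 inf_le_left).trans hx₁.le)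
        · exact inf_le_right.trans ((hg.2.1 inf_le_right).trans hx₂.le)
      have hlhs : sysJoin h₀ (sysMeet f g) c = c := by
        refine Function.iterate_fixed ?_ _
        show h₀ (sysMeet f g c) = c
        rw [hmcfix]
        simp [hh₀]
      obtain ⟨hcj, hhj, hfj, -⟩ := sysJoin_spec hsys hf.1 hf.2.1 c
      set j := sysJoin h₀ f c with hj
      have hrhs : sysMeet (sysJoin h₀ f) g c = j ⊓ g c := rfl
      rw [hlhs, hrhs] at heq
      by_cases hjc : j ≤ c
      · have hjec : j = c := le_antisymm hjc hcj
        left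
        rw [← hjec]
        exact hfj
      · have hgj : g j = j := by
          have := hhj
          rw [hh₀] at this
          simpa [if_neg hjc] using this
        have hgcj : g c ≤ j := (hg.2.1 hcj).trans hgj.le
        right
        exact (heq.trans (inf_eq_right.mpr hgcj)).symm
    rcases hab with h1 | h1 <;> rcases hbb with h2 | h2
    · exact Or.inl (meetΦ f hf a b h1 h2)
    · exact mixed a b h1 h2
    · rw [inf_comm a b]
      exact mixed b a h2 h1
    · exact Or.inr (meetΦ g hg a b h1 h2)
  · intro hcl h hh hhg
    funext a
    have minfl : ∀ x, x ≤ sysMeet f g x := fun x => le_inf (hf.1 x) (hg.1 x)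
    have mmono : Monotone (sysMeet f g) := fun x y hxy =>
      inf_le_inf (hf.2.1 hxy) (hg.2.1 hxy)
    obtain ⟨hac, hhc, hmc, hcmin⟩ := sysJoin_spec hh minfl mmono a
    set c := sysJoin h (sysMeet f g) a with hcdef
    obtain ⟨haj, hhj, hfj, hjmin⟩ := sysJoin_spec hh hf.1 hf.2.1 a
    set j := sysJoin h f a with hjdef
    show c = j ⊓ g a
    have hmc' : f c ⊓ g c = c := hmc
    apply le_antisymm
    · refine hcmin (j ⊓ g a) (le_inf haj (hg.1 a)) ?_ ?_
      · refine le_antisymm (le_inf ((hh.2.1 inf_le_left).trans hhj.le) ?_) (hh.1 _)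
        exact (hh.2.1 inf_le_right).trans ((hhg (g a)).trans (hg.2.2 a).le)
      · show f (j ⊓ g a) ⊓ g (j ⊓ g a) = j ⊓ g a
        refine le_antisymm (le_inf ?_ ?_) (minfl _)
        · exact inf_le_left.trans ((hf.2.1 inf_le_left).trans hfj.le)
        · exact inf_le_right.trans ((hg.2.1 inf_le_right).trans (hg.2.2 a).le)
    · have hcmem := hcl (f c) (g c) (Or.inl (hf.2.2 c)) (Or.inr (hg.2.2 c))
      rw [show f c ⊓ g c = c from hmc'] at hcmem
      rcases hcmem with hfc | hgc
      · exact inf_le_left.trans (hjmin c hac hhc hfc)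
      · exact inf_le_right.trans ((hg.2.1 hac).trans_eq hgc)
end

section
/- Every system on a finite lattice P is the meet of coatoms of the lattice of systems, where the coatoms are exactly the systems with exactly two fixed points (one of which is the maximum element of P). -/
/-- `c` is a coatom of the lattice of systems: it is covered by the maximum
system `fun _ => ⊤`. -/
def CoatomSys {P : Type*} [Lattice P] [OrderTop P] (c : P → P) : Prop :=
  IsSystem c ∧ c ≠ (fun _ => ⊤) ∧
    ∀ h : P → P, IsSystem h → (∀ a, c a ≤ h a) → h = c ∨ h = (fun _ => ⊤)

open Classical in
noncomputable def catom {P : Type*} [Lattice P] [OrderTop P] (a : P) : P → P :=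
  fun x => if x ≤ a then a else ⊤

lemma catom_isSystem {P : Type*} [Lattice P] [OrderTop P] (a : P) :
    IsSystem (catom a) := by
  refine ⟨?_, ?_, ?_⟩
  · intro x; unfold catom; split
    · assumption
    · exact le_top
  · intro x y hxy; unfold catom
    by_cases hy : y ≤ a
    · rw [if_pos hy, if_pos (hxy.trans hy)]
    · rw [if_neg hy]; exact le_top
  · intro x; unfold catom
    by_cases hx : x ≤ a
    · simp [hx]
    · rw [if_neg hx]
      by_cases ht : (⊤ : P) ≤ a
      · rw [if_pos ht]; exact le_antisymm le_top ht
      · rw [if_neg ht]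

lemma catom_fixed {P : Type*} [Lattice P] [OrderTop P] {a : P} (ha : a ≠ ⊤) :
    {x | catom a x = x} = {a, ⊤} := by
  ext x
  simp only [Set.mem_setOf_eq, Set.mem_insert_iff, Set.mem_singleton_iff]
  constructor
  · intro hx; unfold catom at hx
    by_cases h : x ≤ a
    · left; rw [if_pos h] at hx; exact hx.symm
    · right; rw [if_neg h] at hx; exact hx.symm
  · rintro (rfl | rfl) <;> unfold catom
    · rw [if_pos le_rfl]
    · rw [if_neg (fun h => ha (le_antisymm le_top h))]

lemma catom_coatom {P : Type*} [Lattice P] [OrderTop P] {a : P} (ha : a ≠ ⊤) :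
    CoatomSys (catom a) := by
  refine ⟨catom_isSystem a, ?_, ?_⟩
  · intro h
    have : catom a a = ⊤ := congrFun h a
    unfold catom at this; rw [if_pos le_rfl] at this; exact ha this
  · intro h hh hle
    have hfix : ∀ x, h x = x → catom a x = x := by
      intro x hx
      have h1 : catom a x ≤ x := by have := hle x; rwa [hx] at this
      exact le_antisymm h1 ((catom_isSystem a).1 x)
    by_cases hfa : h a = a
    · left
      funext x
      have hx := hh.2.2 x
      have hmem : catom a (h x) = h x := hfix _ hx
      unfold catom at hmem ⊢
      by_cases hxa : x ≤ a
      · rw [if_pos hxa]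
        have h2 : h x ≤ a := hfa ▸ hh.2.1 hxa
        rw [if_pos h2] at hmem; exact hmem.symm
      · rw [if_neg hxa]
        by_cases h2 : h x ≤ a
        · exact absurd ((hh.1 x).trans h2) hxa
        · rw [if_neg h2] at hmem; exact hmem.symm
    · right
      funext x
      have hx := hh.2.2 x
      have hmem : catom a (h x) = h x := hfix _ hx
      unfold catom at hmem
      by_cases h2 : h x ≤ a
      · rw [if_pos h2] at hmem
        exact absurd (hmem ▸ hx) hfa
      · rw [if_neg h2] at hmem; exact hmem.symm

lemma eq_catom {P : Type*} [Lattice P] [OrderTop P] {c : P → P} {a : P}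
    (hc : IsSystem c) (ha : a ≠ ⊤) (hΦ : {x | c x = x} = {a, ⊤}) :
    c = catom a := by
  have hca : c a = a := by
    have : a ∈ ({a, ⊤} : Set P) := Or.inl rfl
    rw [← hΦ] at this; exact this
  funext x
  have hx : c x ∈ ({a, ⊤} : Set P) := by
    rw [← hΦ]; exact hc.2.2 x
  unfold catom
  by_cases hxa : x ≤ a
  · rw [if_pos hxa]
    have h1 : c x ≤ a := hca ▸ hc.2.1 hxa
    rcases hx with h | h
    · exact h
    · exact absurd (h ▸ h1) (fun h' => ha (le_antisymm le_top h'))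
  · rw [if_neg hxa]
    rcases hx with h | h
    · exact absurd (h ▸ hc.1 x) hxa
    · exact h

theorem stmt14 {P : Type*} [Lattice P] [Fintype P] [OrderTop P] :
    (∀ c : P → P, CoatomSys c ↔
      (IsSystem c ∧ ∃ a : P, a ≠ ⊤ ∧ {x | c x = x} = {a, ⊤})) ∧
    (∀ f : P → P, IsSystem f →
      ∃ C : Finset (P → P), (∀ c ∈ C, CoatomSys c) ∧
        ∀ a, f a = C.inf (fun c => c a)) := by
  classical
  constructor
  · intro c
    constructor
    · rintro ⟨hc, hne, hmax⟩
      refine ⟨hc, ?_⟩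
      -- c is not the top function, so it has a fixed point ≠ ⊤
      have : ∃ x, c x ≠ ⊤ := by
        by_contra h
        push_neg at h
        exact hne (funext h)
      obtain ⟨x, hx⟩ := this
      set a := c x with hadef
      have hafix : c a = a := hc.2.2 x
      refine ⟨a, hx, ?_⟩
      have hle : ∀ y, c y ≤ catom a y := by
        intro y
        unfold catom
        by_cases hy : y ≤ a
        · rw [if_pos hy]; exact hafix ▸ hc.2.1 hy
        · rw [if_neg hy]; exact le_top
      rcases hmax (catom a) (catom_isSystem a) hle with h | h
      · rw [← h]; exact catom_fixed hx
      · exfalso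
        have := congrFun h a
        unfold catom at this; rw [if_pos le_rfl] at this
        exact hx this
    · rintro ⟨hc, a, ha, hΦ⟩
      rw [eq_catom hc ha hΦ]
      exact catom_coatom ha
  · intro f hf
    set S : Finset P := Finset.univ.filter (fun a => f a = a ∧ a ≠ ⊤) with hS
    refine ⟨S.image catom, ?_, ?_⟩
    · intro c hc
      simp only [Finset.mem_image] at hc
      obtain ⟨a, haS, rfl⟩ := hc
      rw [hS, Finset.mem_filter] at haS
      exact catom_coatom haS.2.2
    · intro x
      rw [Finset.inf_image]
      apply le_antisymm
      · apply Finset.le_inf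
        intro a haS
        rw [hS, Finset.mem_filter] at haS
        simp only [Function.comp_apply]
        unfold catom
        by_cases hxa : x ≤ a
        · rw [if_pos hxa]; exact haS.2.1 ▸ hf.2.1 hxa
        · rw [if_neg hxa]; exact le_top
      · by_cases hfx : f x = ⊤
        · rw [hfx]; exact le_top
        · have hmem : f x ∈ S := by
            rw [hS, Finset.mem_filter]
            exact ⟨Finset.mem_univ _, hf.2.2 x, hfx⟩
          calc S.inf ((fun c => c x) ∘ catom) ≤ catom (f x) x := Finset.inf_le hmem
            _ = f x := by unfold catom; rw [if_pos (hf.1 x)]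
end

section
/- For a covering pair s ≺ t in a finite lattice P, the least system f_{st} mapping s to t is prime, i.e., its set of non-fixed points is closed under binary meet. -/
theorem stmt15 {P : Type*} [Lattice P] [Fintype P] {s t : P} (hst : s ⋖ t)
    {f : P → P} (hf : IsSystem f) (hfs : f s = t)
    (hleast : ∀ g : P → P, IsSystem g → g s = t → ∀ a, f a ≤ g a) :
    ∀ a b : P, f a ≠ a → f b ≠ b → f (a ⊓ b) ≠ a ⊓ b := by
  classical
  obtain ⟨hle, hmono, _⟩ := hf
  set g : P → P := fun x => if s ≤ x then x ⊔ t else x with hg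
  have hgsys : IsSystem g := by
    refine ⟨?_, ?_, ?_⟩
    · intro a; simp only [hg]; split <;> simp
    · intro a b hab
      simp only [hg]
      by_cases ha : s ≤ a
      · rw [if_pos ha, if_pos (ha.trans hab)]
        exact sup_le_sup_right hab t
      · rw [if_neg ha]
        split
        · exact hab.trans le_sup_left
        · exact hab
    · intro a
      simp only [hg]
      by_cases ha : s ≤ a
      · rw [if_pos ha, if_pos (ha.trans le_sup_left), sup_assoc, sup_idem]
      · rw [if_neg ha, if_neg ha]
  have hgs : g s = t := by
    simp only [hg, if_pos le_rfl, sup_eq_right.mpr hst.le]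
  have hfg := hleast g hgsys hgs
  have key : ∀ a : P, f a ≠ a → s ≤ a := by
    intro a hfa
    by_contra hs
    have : f a ≤ a := by simpa [hg, hs] using hfg a
    exact hfa (le_antisymm this (hle a))
  intro a b hfa hfb heq
  have hsa := key a hfa
  have hsb := key b hfb
  have hta : t ≤ a := by
    have : t ≤ f (a ⊓ b) := hfs ▸ hmono (le_inf hsa hsb)
    exact (this.trans heq.le).trans inf_le_left
  have : f a ≤ a := by
    have := hfg a
    simpa [hg, hsa, sup_eq_left.mpr hta] using this
  exact hfa (le_antisymm this (hle a))
end

section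
/- For a system f on a finite lattice P and an element a ∈ P, f(a) is the least fixed point of the system f + free(a), where free(a) is the map x ↦ x ∨ a. -/
theorem stmt16 {P : Type*} [Lattice P] [Fintype P] {f : P → P}
    (hf : IsSystem f) (a : P) {j : P → P} (hj : IsSystem j)
    (hjf : ∀ x, f x ≤ j x) (hja : ∀ x, x ⊔ a ≤ j x)
    (hle : ∀ k : P → P, IsSystem k → (∀ x, f x ≤ k x) → (∀ x, x ⊔ a ≤ k x) →
      ∀ x, j x ≤ k x) :
    IsLeast {p | j p = p} (f a) := by
  obtain ⟨fext, fmono, fidem⟩ := hf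
  obtain ⟨jext, jmono, jidem⟩ := hj
  set k : P → P := fun x => f (x ⊔ a) with hk
  have hksys : IsSystem k := by
    refine ⟨fun x => le_trans le_sup_left (fext _), fun x y hxy =>
      fmono (sup_le_sup_right hxy a), fun x => ?_⟩
    have h1 : f (x ⊔ a) ⊔ a = f (x ⊔ a) :=
      sup_eq_left.mpr (le_trans le_sup_right (fext _))
    simp only [hk, h1, fidem]
  have hjk : ∀ x, j x ≤ k x :=
    hle k hksys (fun x => fmono le_sup_left) (fun x => fext _)
  have hfix : j (f a) = f a := by
    have h1 : f a ⊔ a = f a := sup_eq_left.mpr (fext a)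
    refine le_antisymm ?_ (jext _)
    calc j (f a) ≤ f (f a ⊔ a) := hjk _
      _ = f a := by rw [h1, fidem]
  refine ⟨hfix, fun p hp => ?_⟩
  have hap : a ≤ p := le_trans (le_trans le_sup_right (hja p)) hp.le
  exact le_trans (fmono hap) (le_trans (hjf p) hp.le)
end

section
/- The maps free : P → L_P (a ↦ (x ↦ x ∨ a)) and eval : L_P → P (sending a system to its least fixed point) form a Galois connection: free(a) ≤ f if and only if a ≤ eval(f). -/
theorem stmt17 {P : Type*} [Lattice P] [Fintype P] {f : P → P}
    (hf : IsSystem f) {l : P} (hl : IsLeast {p | f p = p} l) (a : P) :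
    (∀ x, x ⊔ a ≤ f x) ↔ a ≤ l := by
  constructor
  · intro h
    have := h l
    rw [hl.1] at this
    exact le_sup_right.trans this
  · intro h x
    have hfx : l ≤ f x := hl.2 (hf.2.2 x)
    exact sup_le (hf.1 x) (h.trans hfx)
end

section
/- A system f on a finite lattice P admits a unique minimal shock failing it if and only if f is prime; in that case the unique minimal shock is ¬f, the system whose fixed point set is (P \ Φf) ∪ {p̂}. -/
/-- Shock `s` fails system `f`: equivalently `s + f = 1`. -/
def Fails {P : Type*} [Lattice P] [OrderTop P] (s f : P → P) : Prop :=
  {a | s a = a} ∩ {a | f a = a} = {⊤}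

/-- `s` is a minimal shock failing `f`. -/
def MinShock {P : Type*} [Lattice P] [OrderTop P] (f s : P → P) : Prop :=
  IsSystem s ∧ Fails s f ∧
    ∀ t : P → P, IsSystem t → Fails t f → (∀ x, t x ≤ s x) → t = s

section Aux

variable {P : Type*} [Lattice P]

lemma sys_top [OrderTop P] {s : P → P} (hs : IsSystem s) : s ⊤ = ⊤ :=
  le_antisymm le_top (hs.1 ⊤)

lemma sys_le_fixed {s : P → P} (hs : IsSystem s) {a c : P} (hc : s c = c) (h : a ≤ c) :
    s a ≤ c := hc ▸ hs.2.1 h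

lemma sys_le_of_subset {s t : P → P} (hs : IsSystem s) (ht : IsSystem t)
    (hsub : {a | s a = a} ⊆ {a | t a = a}) : ∀ a, t a ≤ s a := fun a =>
  sys_le_fixed ht (hsub (hs.2.2 a)) (hs.1 a)

lemma sys_ext {s t : P → P} (hs : IsSystem s) (ht : IsSystem t)
    (h : {a | s a = a} = {a | t a = a}) : s = t :=
  funext fun a =>
    le_antisymm (sys_le_of_subset ht hs h.ge a) (sys_le_of_subset hs ht h.le a)

lemma sys_inf_fixed {s : P → P} (hs : IsSystem s) {a b : P} (ha : s a = a) (hb : s b = b) :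
    s (a ⊓ b) = a ⊓ b :=
  le_antisymm (le_inf (sys_le_fixed hs ha inf_le_left) (sys_le_fixed hs hb inf_le_right))
    (hs.1 _)

variable [Fintype P] [OrderTop P]

open Classical in
/-- The closure operator attached to a meet-closed family containing `⊤`. -/
noncomputable def cl (F : Set P) (htop : ⊤ ∈ F) (a : P) : P :=
  (Finset.univ.filter (fun b => b ∈ F ∧ a ≤ b)).inf'
    ⟨⊤, by simp [htop]⟩ id

lemma le_cl {F : Set P} (htop : ⊤ ∈ F) (a : P) : a ≤ cl F htop a := by
  classical
  exact Finset.le_inf' _ _ fun b hb => ((Finset.mem_filter.mp hb).2).2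

lemma cl_le {F : Set P} (htop : ⊤ ∈ F) {a c : P} (hc : c ∈ F) (h : a ≤ c) :
    cl F htop a ≤ c := by
  classical
  exact Finset.inf'_le id (by simp [hc, h])

lemma cl_mem {F : Set P} (htop : ⊤ ∈ F)
    (hmeet : ∀ x ∈ F, ∀ y ∈ F, x ⊓ y ∈ F) (a : P) : cl F htop a ∈ F := by
  classical
  exact Finset.inf'_mem F hmeet _ _ id fun b hb => ((Finset.mem_filter.mp hb).2).1

lemma cl_fixed_of_mem {F : Set P} (htop : ⊤ ∈ F) {a : P} (ha : a ∈ F) :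
    cl F htop a = a :=
  le_antisymm (cl_le htop ha le_rfl) (le_cl htop a)

lemma cl_isSystem {F : Set P} (htop : ⊤ ∈ F)
    (hmeet : ∀ x ∈ F, ∀ y ∈ F, x ⊓ y ∈ F) : IsSystem (cl F htop) := by
  refine ⟨le_cl htop, ?_, ?_⟩
  · intro a b hab
    exact cl_le htop (cl_mem htop hmeet b) (hab.trans (le_cl htop b))
  · intro a
    exact cl_fixed_of_mem htop (cl_mem htop hmeet a)

lemma cl_fixedSet {F : Set P} (htop : ⊤ ∈ F)
    (hmeet : ∀ x ∈ F, ∀ y ∈ F, x ⊓ y ∈ F) : {a | cl F htop a = a} = F := by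
  ext a
  constructor
  · intro h; exact h ▸ cl_mem htop hmeet a
  · intro h; exact cl_fixed_of_mem htop h

omit [Fintype P] in
lemma fixed_subset_of_fails {f s : P → P} (hfail : Fails s f) :
    {a | s a = a} ⊆ {a | f a ≠ a} ∪ {⊤} := by
  intro a ha
  by_cases h : f a = a
  · have : a ∈ ({a | s a = a} ∩ {a | f a = a} : Set P) := ⟨ha, h⟩
    rw [hfail] at this
    exact Or.inr this
  · exact Or.inl h

lemma exists_minShock_le {f s : P → P} (hs : IsSystem s) (hfail : Fails s f) :
    ∃ t, MinShock f t ∧ ∀ x, t x ≤ s x := by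
  classical
  let S : Set (P → P) := {t | IsSystem t ∧ Fails t f ∧ ∀ x, t x ≤ s x}
  obtain ⟨t, htS, hmin⟩ :=
    S.toFinite.exists_minimalFor id S (by exact ⟨s, hs, hfail, fun x => le_rfl⟩)
  refine ⟨t, ⟨htS.1, htS.2.1, ?_⟩, htS.2.2⟩
  intro u hu huf hule
  have huS : u ∈ S := ⟨hu, huf, fun x => (hule x).trans (htS.2.2 x)⟩
  exact le_antisymm (fun x => hule x) (hmin huS (fun x => hule x))

end Aux

theorem stmt18 {P : Type*} [Lattice P] [Fintype P] [OrderTop P] {f : P → P}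
    (hf : IsSystem f) :
    ((∃! s : P → P, MinShock f s) ↔
      ∀ a b : P, f a ≠ a → f b ≠ b → f (a ⊓ b) ≠ a ⊓ b) ∧
    ((∀ a b : P, f a ≠ a → f b ≠ b → f (a ⊓ b) ≠ a ⊓ b) →
      ∀ s : P → P, MinShock f s ↔
        (IsSystem s ∧ {a | s a = a} = {a | f a ≠ a} ∪ {⊤})) := by
  classical
  have hftop : f ⊤ = ⊤ := sys_top hf
  set F : Set P := {a | f a ≠ a} ∪ {⊤} with hFdef
  have htopF : ⊤ ∈ F := Or.inr rfl
  have hmeetF : (∀ a b : P, f a ≠ a → f b ≠ b → f (a ⊓ b) ≠ a ⊓ b) →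
      ∀ x ∈ F, ∀ y ∈ F, x ⊓ y ∈ F := by
    intro hp x hx y hy
    rcases hx with hx | hx
    · rcases hy with hy | hy
      · exact Or.inl (hp x y hx hy)
      · have : y = ⊤ := hy
        subst this
        rw [inf_top_eq]
        exact Or.inl hx
    · have : x = ⊤ := hx
      subst this
      rw [top_inf_eq]
      exact hy
  -- any system whose fixed set is `F` fails `f`
  have fails_of : ∀ t : P → P, {a | t a = a} = F → Fails t f := by
    intro t hΦt
    unfold Fails
    rw [hΦt]
    ext x
    simp only [Set.mem_inter_iff, Set.mem_union, Set.mem_setOf_eq,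
      Set.mem_singleton_iff]
    constructor
    · rintro ⟨h1 | h1, h2⟩
      · exact absurd h2 h1
      · exact h1
    · rintro rfl
      exact ⟨Or.inr rfl, hftop⟩
  -- the characterization, assuming primality
  have char : ∀ (hp : ∀ a b : P, f a ≠ a → f b ≠ b → f (a ⊓ b) ≠ a ⊓ b),
      ∀ t : P → P, MinShock f t ↔ (IsSystem t ∧ {a | t a = a} = F) := by
    intro hp t
    have hs₀ : IsSystem (cl F htopF) := cl_isSystem htopF (hmeetF hp)
    have hΦ₀ : {a | cl F htopF a = a} = F := cl_fixedSet htopF (hmeetF hp)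
    constructor
    · rintro ⟨ht, htf, hmin⟩
      refine ⟨ht, ?_⟩
      have hsub : {a | t a = a} ⊆ F := fixed_subset_of_fails htf
      have hle : ∀ x, cl F htopF x ≤ t x :=
        sys_le_of_subset ht hs₀ (by rw [hΦ₀]; exact hsub)
      have := hmin (cl F htopF) hs₀ (fails_of _ hΦ₀) hle
      rw [← this]
      exact hΦ₀
    · rintro ⟨ht, hΦt⟩
      refine ⟨ht, fails_of t hΦt, ?_⟩
      intro u hu huf hule
      have h1 : {a | t a = a} ⊆ {a | u a = a} := by
        intro a ha
        exact le_antisymm ((hule a).trans_eq ha) (hu.1 a)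
      have h2 : {a | u a = a} ⊆ {a | t a = a} := by
        rw [hΦt]; exact fixed_subset_of_fails huf
      exact sys_ext hu ht (Set.Subset.antisymm h2 h1)
  constructor
  · constructor
    · -- existence of a unique minimal shock implies primality
      intro hEx a b ha hb hab
      -- a minimal shock fixing any given non-fixed point
      have shock_at : ∀ c : P, f c ≠ c → ∃ t, MinShock f t ∧ t c = c := by
        intro c hc
        set Fc : Set P := {c, ⊤} with hFc
        have htc : ⊤ ∈ Fc := Or.inr rfl
        have hmc : ∀ x ∈ Fc, ∀ y ∈ Fc, x ⊓ y ∈ Fc := by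
          intro x hx y hy
          simp only [hFc, Set.mem_insert_iff, Set.mem_singleton_iff] at hx hy ⊢
          rcases hx with rfl | rfl <;> rcases hy with rfl | rfl <;>
            simp [inf_idem]
        have hsys : IsSystem (cl Fc htc) := cl_isSystem htc hmc
        have hΦ : {x | cl Fc htc x = x} = Fc := cl_fixedSet htc hmc
        have hfails : Fails (cl Fc htc) f := by
          unfold Fails
          rw [hΦ]
          ext x
          simp only [hFc, Set.mem_inter_iff, Set.mem_insert_iff,
            Set.mem_singleton_iff, Set.mem_setOf_eq]
          constructor
          · rintro ⟨rfl | rfl, h2⟩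
            · exact absurd h2 hc
            · rfl
          · rintro rfl
            exact ⟨Or.inr rfl, hftop⟩
        obtain ⟨t, htmin, htle⟩ := exists_minShock_le hsys hfails
        refine ⟨t, htmin, ?_⟩
        have hcfix : cl Fc htc c = c := cl_fixed_of_mem htc (Or.inl rfl)
        exact le_antisymm ((htle c).trans_eq hcfix) (htmin.1.1 c)
      obtain ⟨s, hsmin, huniq⟩ := hEx
      obtain ⟨ta, hta, htaa⟩ := shock_at a ha
      obtain ⟨tb, htb, htbb⟩ := shock_at b hb
      have hsa : s a = a := huniq ta hta ▸ htaa
      have hsb : s b = b := huniq tb htb ▸ htbb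
      have hsab : s (a ⊓ b) = a ⊓ b := sys_inf_fixed hsmin.1 hsa hsb
      have : a ⊓ b ∈ ({a | s a = a} ∩ {a | f a = a} : Set P) := ⟨hsab, hab⟩
      rw [hsmin.2.1] at this
      have hatop : a = ⊤ := le_antisymm le_top (this ▸ inf_le_left)
      exact ha (hatop ▸ hftop)
    · -- primality implies existence of a unique minimal shock
      intro hp
      have hs₀ : IsSystem (cl F htopF) := cl_isSystem htopF (hmeetF hp)
      have hΦ₀ : {a | cl F htopF a = a} = F := cl_fixedSet htopF (hmeetF hp)
      refine ⟨cl F htopF, (char hp _).mpr ⟨hs₀, hΦ₀⟩, ?_⟩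
      intro t ht
      obtain ⟨htsys, hΦt⟩ := (char hp t).mp ht
      exact sys_ext htsys hs₀ (by rw [hΦt, hΦ₀])
  · intro hp s
    exact char hp s
end
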